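/- Let α > 0, β > 0, γ > 0 and define τ = √(α² + γβ²). The function e : [0,∞) → ℝ given by e(d) = (Λ(d)·τ − α)/γ, where Λ(d) = (e^{2dτ}ρ + 1)/(e^{2dτ}ρ − 1) and ρ = (γ·(β²/(2α)) + τ + α)/(γ·(β²/(2α)) − τ + α) (assuming the denominator of ρ is positive), satisfies the Riccati differential equation e'(d) = −2α·e(d) − γ·e(d)² + β² with initial condition e(0) = β²/(2α). -/

import Mathlib

open Real

/-- Closed-form solution of the Kalman–Bucy Riccati ODE for the
Ornstein–Uhlenbeck process with parameter `α`, diffusion `β`, SNR `γ`. -/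
theorem ou_riccati_solution (α β γ : ℝ) (hα : 0 < α) (hβ : 0 < β) (hγ : 0 < γ)
    (τ : ℝ) (hτ : τ = Real.sqrt (α ^ 2 + γ * β ^ 2))
    (ρ : ℝ) (hρ : ρ = (γ * (β ^ 2 / (2 * α)) + τ + α) / (γ * (β ^ 2 / (2 * α)) - τ + α))
    (hden : 0 < γ * (β ^ 2 / (2 * α)) - τ + α)
    (e : ℝ → ℝ)
    (he : ∀ d, e d = ((Real.exp (2 * d * τ) * ρ + 1) / (Real.exp (2 * d * τ) * ρ - 1) * τ - α) / γ) :
    e 0 = β ^ 2 / (2 * α) ∧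
      ∀ d : ℝ, 0 ≤ d → HasDerivAt e (-2 * α * e d - γ * (e d) ^ 2 + β ^ 2) d := by
  have hτ2 : τ ^ 2 = α ^ 2 + γ * β ^ 2 := by
    rw [hτ, sq_sqrt]; positivity
  have hτpos : 0 < τ := by
    rw [hτ]; exact Real.sqrt_pos.mpr (by positivity)
  have hβ2 : β ^ 2 = (τ ^ 2 - α ^ 2) / γ := by
    rw [hτ2]; field_simp; ring
  have hρ1 : 1 < ρ := by
    rw [hρ, lt_div_iff₀ hden]; nlinarith
  have hρm1 : ρ - 1 ≠ 0 := sub_ne_zero.mpr (ne_of_gt hρ1)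
  have hρeq : ρ * (γ * (β ^ 2 / (2 * α)) - τ + α) = γ * (β ^ 2 / (2 * α)) + τ + α := by
    rw [hρ, div_mul_cancel₀ _ (ne_of_gt hden)]
  have hefun : e = fun x => ((Real.exp (2 * x * τ) * ρ + 1) / (Real.exp (2 * x * τ) * ρ - 1) * τ - α) / γ := funext he
  constructor
  · rw [he 0]
    simp only [mul_zero, zero_mul, Real.exp_zero, one_mul]
    have h2α : γ * (β ^ 2 / (2 * α)) * (2 * α) = γ * β ^ 2 := by
      field_simp
    field_simp
    nlinarith [hρeq, h2α, mul_pos hγ hτpos]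
  · intro d hd
    rw [hefun]
    set N := Real.exp (2 * d * τ) * ρ with hN
    have hN1 : 1 < N := by
      have h1 : 1 ≤ Real.exp (2 * d * τ) := Real.one_le_exp (by positivity)
      nlinarith
    have hD : (0:ℝ) < N - 1 := by linarith
    have hNd : HasDerivAt (fun x => Real.exp (2 * x * τ) * ρ) (2 * τ * N) d := by
      have h1 : HasDerivAt (fun x : ℝ => 2 * x * τ) (2 * τ) d := by
        simpa using ((hasDerivAt_id d).const_mul 2).mul_const τ
      have := h1.exp.mul_const ρ
      refine this.congr_deriv ?_
      rw [hN]; ring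
    have hΛ : HasDerivAt (fun x => (Real.exp (2 * x * τ) * ρ + 1) / (Real.exp (2 * x * τ) * ρ - 1))
        ((2 * τ * N * (N - 1) - (N + 1) * (2 * τ * N)) / (N - 1) ^ 2) d :=
      (hNd.add_const 1).div (hNd.sub_const 1) (ne_of_gt hD)
    have he' := ((hΛ.mul_const τ).sub_const α).div_const γ
    refine he'.congr_deriv (Eq.symm ?_)
    show -2 * α * (((N + 1) / (N - 1) * τ - α) / γ)
        - γ * ((((N + 1) / (N - 1) * τ - α) / γ)) ^ 2 + β ^ 2
      = (2 * τ * N * (N - 1) - (N + 1) * (2 * τ * N)) / (N - 1) ^ 2 * τ / γ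
    have hDne : N - 1 ≠ 0 := ne_of_gt hD
    rw [hβ2]
    clear_value N
    field_simp
    ring
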